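/- Let p be a prime (regarded as a real number) and let K, L, n, c, t be natural numbers with 1 ≤ c ≤ n and 1 ≤ t < L. For integers 1 ≤ a ≤ r define μ(r,a) := 1 if a = r and μ(r,a) := p^{r−a}(1 − p^{−1}) if a < r. Then for every real number s with s > (K+n)/(L−t), the series Σ_{r=1}^{∞} Σ_{a_1=1}^{r} ⋯ Σ_{a_n=1}^{r} μ(r,a_1)⋯μ(r,a_n) · p^{Kr − Lrs} · ( p^{t·s·min{r, a_1, …, a_c}} − 1 ) converges absolutely and its sum equals p^{K − (L−t)s}(1 − p^{−ts}) / ( (1 − p^{K + (n−c) − (L−t)s})(1 − p^{K + n − Ls}) ). -/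

import Mathlib

open Finset

private lemma geo_aux (P : ℝ) (hP : P ≠ 0) (d : ℕ) :
    ∑ j ∈ Finset.range (d + 1), (if j = 0 then (1 : ℝ) else P ^ j * (1 - P⁻¹)) = P ^ d := by
  induction d with
  | zero => simp
  | succ d ih =>
    rw [Finset.sum_range_succ, ih, if_neg (Nat.succ_ne_zero d)]
    field_simp
    ring

private lemma mu_sum (P : ℝ) (hP : P ≠ 0) (r m : ℕ) (hm : m ≤ r) :
    ∑ a ∈ Finset.Icc m r, (if a = r then (1 : ℝ) else P ^ (r - a) * (1 - P⁻¹)) = P ^ (r - m) := by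
  rw [← geo_aux P hP (r - m)]
  refine Finset.sum_nbij' (i := fun a => r - a) (j := fun j => r - j) ?_ ?_ ?_ ?_ ?_
  · intro a ha
    simp only [Finset.mem_Icc] at ha
    simp only [Finset.mem_range]
    omega
  · intro j hj
    simp only [Finset.mem_range] at hj
    simp only [Finset.mem_Icc]
    omega
  · intro a ha
    simp only [Finset.mem_Icc] at ha
    omega
  · intro j hj
    simp only [Finset.mem_range] at hj
    omega
  · intro a ha
    simp only [Finset.mem_Icc] at ha
    have : a = r ↔ r - a = 0 := by omega
    simp only [this]

private lemma tele_aux (f : ℕ → ℝ) (M : ℕ) :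
    ∑ m ∈ Finset.Icc 1 M, (f m - f (m - 1)) = f M - f 0 := by
  induction M with
  | zero => simp
  | succ M ih =>
    rw [Finset.sum_Icc_succ_top (by omega : 1 ≤ M + 1), ih]
    simp

private lemma innerSumAux (P : ℝ) (hP0 : 0 < P) (n c : ℕ) (hc1 : 0 < c) (hcn : c ≤ n)
    (y : ℝ) (r : ℕ) :
    ∑ a ∈ Fintype.piFinset (fun _ : Fin n => Finset.Icc 1 r),
      (∏ i : Fin n, (if a i = r then (1 : ℝ) else P ^ (r - a i) * (1 - P⁻¹)))
        * (P ^ (y * ((min r (Finset.univ.inf' ⟨⟨0, hc1⟩, Finset.mem_univ _⟩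
            (fun i : Fin c => a (Fin.castLE hcn i)))) : ℝ)) - 1)
    = ∑ m ∈ Finset.Icc 1 r,
        (P ^ (y * (m : ℝ)) - P ^ (y * ((m - 1 : ℕ) : ℝ)))
          * P ^ ((r - m) * c + (r - 1) * (n - c)) := by
  classical
  have hP : P ≠ 0 := ne_of_gt hP0
  -- Step 1: pointwise telescoping rewrite
  have hkey : ∀ a ∈ Fintype.piFinset (fun _ : Fin n => Finset.Icc 1 r),
      (∏ i : Fin n, (if a i = r then (1 : ℝ) else P ^ (r - a i) * (1 - P⁻¹)))
        * (P ^ (y * ((min r (Finset.univ.inf' ⟨⟨0, hc1⟩, Finset.mem_univ _⟩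
            (fun i : Fin c => a (Fin.castLE hcn i)))) : ℝ)) - 1)
      = ∑ m ∈ Finset.Icc 1 r,
          (P ^ (y * (m : ℝ)) - P ^ (y * ((m - 1 : ℕ) : ℝ)))
            * ((∏ i : Fin n, (if a i = r then (1 : ℝ) else P ^ (r - a i) * (1 - P⁻¹)))
              * (if m ≤ min r (Finset.univ.inf' ⟨⟨0, hc1⟩, Finset.mem_univ _⟩
                    (fun i : Fin c => a (Fin.castLE hcn i))) then (1 : ℝ) else 0)) := by
    intro a ha
    have hcast : (min (r : ℝ) (Finset.univ.inf' ⟨⟨0, hc1⟩, Finset.mem_univ _⟩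
          (fun i : Fin c => ((a (Fin.castLE hcn i) : ℕ) : ℝ))))
        = ((min r (Finset.univ.inf' ⟨⟨0, hc1⟩, Finset.mem_univ _⟩
            (fun i : Fin c => a (Fin.castLE hcn i))) : ℕ) : ℝ) := by
      rw [Nat.cast_min]
      congr 1
      exact (Finset.apply_inf'_eq_inf'_comp _ (fun x : ℕ => (x : ℝ)) (fun x y => by simp)).symm
    rw [hcast]
    set M := min r (Finset.univ.inf' ⟨⟨0, hc1⟩, Finset.mem_univ _⟩
        (fun i : Fin c => a (Fin.castLE hcn i))) with hM
    have hMr : M ≤ r := min_le_left _ _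
    have hstep : ∀ m ∈ Finset.Icc 1 r,
        (P ^ (y * (m : ℝ)) - P ^ (y * ((m - 1 : ℕ) : ℝ)))
          * ((∏ i : Fin n, (if a i = r then (1 : ℝ) else P ^ (r - a i) * (1 - P⁻¹)))
            * (if m ≤ M then (1 : ℝ) else 0))
        = (∏ i : Fin n, (if a i = r then (1 : ℝ) else P ^ (r - a i) * (1 - P⁻¹)))
            * (if m ≤ M then (P ^ (y * (m : ℝ)) - P ^ (y * ((m - 1 : ℕ) : ℝ))) else 0) := by
      intro m _
      by_cases h : m ≤ M <;> simp [h] <;> ring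
    rw [Finset.sum_congr rfl hstep, ← Finset.mul_sum, ← Finset.sum_filter]
    have hfil : (Finset.Icc 1 r).filter (fun m => m ≤ M) = Finset.Icc 1 M := by
      ext m
      simp only [Finset.mem_filter, Finset.mem_Icc]
      omega
    rw [hfil, tele_aux (fun m => P ^ (y * (m : ℝ))) M]
    simp only [Nat.cast_zero, mul_zero, Real.rpow_zero]
  rw [Finset.sum_congr rfl hkey, Finset.sum_comm]
  refine Finset.sum_congr rfl fun m hm => ?_
  simp only [Finset.mem_Icc] at hm
  rw [← Finset.mul_sum]
  congr 1
  -- Step 2: factor the sum over a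
  have hpsi : ∀ a ∈ Fintype.piFinset (fun _ : Fin n => Finset.Icc 1 r),
      (∏ i : Fin n, (if a i = r then (1 : ℝ) else P ^ (r - a i) * (1 - P⁻¹)))
        * (if m ≤ min r (Finset.univ.inf' ⟨⟨0, hc1⟩, Finset.mem_univ _⟩
              (fun i : Fin c => a (Fin.castLE hcn i))) then (1 : ℝ) else 0)
      = ∏ i : Fin n, ((if a i = r then (1 : ℝ) else P ^ (r - a i) * (1 - P⁻¹))
          * (if (i : ℕ) < c then (if m ≤ a i then (1 : ℝ) else 0) else 1)) := by
    intro a _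
    rw [Finset.prod_mul_distrib]
    congr 1
    calc (if m ≤ min r (Finset.univ.inf' ⟨⟨0, hc1⟩, Finset.mem_univ _⟩
              (fun i : Fin c => a (Fin.castLE hcn i))) then (1 : ℝ) else 0)
        = (if (∀ i : Fin c, m ≤ a (Fin.castLE hcn i)) then (1 : ℝ) else 0) := by
          refine if_congr ?_ rfl rfl
          rw [le_min_iff]
          constructor
          · exact fun h i => (Finset.le_inf'_iff _ _).1 h.2 i (Finset.mem_univ i)
          · exact fun h => ⟨hm.2, (Finset.le_inf'_iff _ _).2 fun i _ => h i⟩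
      _ = ∏ i : Fin c, (if m ≤ a (Fin.castLE hcn i) then (1 : ℝ) else 0) := by
          by_cases h : ∀ i : Fin c, m ≤ a (Fin.castLE hcn i)
          · simp [h]
          · rw [if_neg h]
            obtain ⟨i, hi⟩ := not_forall.mp h
            exact (Finset.prod_eq_zero (Finset.mem_univ i) (by simp [hi])).symm
      _ = ∏ i ∈ Finset.univ.filter (fun i : Fin n => (i : ℕ) < c),
            (if m ≤ a i then (1 : ℝ) else 0) := by
          refine Finset.prod_bij' (fun (i : Fin c) _ => Fin.castLE hcn i)
            (fun i hi => (⟨(i : ℕ), (Finset.mem_filter.mp hi).2⟩ : Fin c)) ?_ ?_ ?_ ?_ ?_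
          · intro i _
            simp only [Finset.mem_filter, Finset.mem_univ, true_and]
            exact i.isLt
          · intro i _
            exact Finset.mem_univ _
          · intro i _
            rfl
          · intro i _
            rfl
          · intro i _
            rfl
      _ = ∏ i : Fin n, (if (i : ℕ) < c then (if m ≤ a i then (1 : ℝ) else 0) else 1) :=
          Finset.prod_filter _ _
  rw [Finset.sum_congr rfl hpsi,
    (Finset.prod_univ_sum (fun _ : Fin n => Finset.Icc 1 r)
      (fun (i : Fin n) (v : ℕ) => (if v = r then (1 : ℝ) else P ^ (r - v) * (1 - P⁻¹))
        * (if (i : ℕ) < c then (if m ≤ v then (1 : ℝ) else 0) else 1))).symm]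
  have hfactor : ∀ i : Fin n,
      ∑ v ∈ Finset.Icc 1 r, ((if v = r then (1 : ℝ) else P ^ (r - v) * (1 - P⁻¹))
        * (if (i : ℕ) < c then (if m ≤ v then (1 : ℝ) else 0) else 1))
      = if (i : ℕ) < c then P ^ (r - m) else P ^ (r - 1) := by
    intro i
    by_cases hic : (i : ℕ) < c
    · simp only [hic, if_true, mul_ite, mul_one, mul_zero]
      rw [← Finset.sum_filter]
      have hfil2 : (Finset.Icc 1 r).filter (fun v => m ≤ v) = Finset.Icc m r := by
        ext v
        simp only [Finset.mem_filter, Finset.mem_Icc]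
        omega
      rw [hfil2]
      exact mu_sum P hP r m hm.2
    · simp only [hic, if_false, mul_one]
      exact mu_sum P hP r 1 (le_trans hm.1 hm.2)
  rw [Finset.prod_congr rfl fun i _ => hfactor i, Finset.prod_ite, Finset.prod_const,
    Finset.prod_const]
  have hcard : (Finset.univ.filter (fun i : Fin n => (i : ℕ) < c)).card = c := by
    have h1 : (Finset.univ.filter (fun i : Fin n => (i : ℕ) < c)).card
        = (Finset.univ : Finset (Fin c)).card :=
      Finset.card_bij' (fun (i : Fin n) hi => (⟨(i : ℕ), (Finset.mem_filter.mp hi).2⟩ : Fin c))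
        (fun i _ => Fin.castLE hcn i) (fun i _ => Finset.mem_univ _)
        (fun i _ => by
          simp only [Finset.mem_filter, Finset.mem_univ, true_and]
          exact i.isLt)
        (fun i hi => rfl) (fun i hi => rfl)
    rw [h1, Finset.card_univ, Fintype.card_fin]
  have hcard2 : (Finset.univ.filter (fun i : Fin n => ¬ (i : ℕ) < c)).card = n - c := by
    have h := Finset.card_filter_add_card_filter_not
      (s := (Finset.univ : Finset (Fin n))) (p := fun i : Fin n => (i : ℕ) < c)
    rw [Finset.card_univ, Fintype.card_fin, hcard] at h
    omega
  rw [hcard, hcard2, ← pow_mul, ← pow_mul, ← pow_add]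

private lemma pow_helper (P : ℝ) (hP0 : 0 < P) (q x1 x2 x3 y1 y2 y3 : ℝ)
    (h : x1 + x2 + x3 = y1 + y2 + y3) :
    (P ^ x1 - P ^ x1 * P ^ q) * P ^ x2 * P ^ x3
      = (1 - P ^ q) * P ^ y1 * P ^ y2 * P ^ y3 := by
  have e : P ^ x1 * P ^ x2 * P ^ x3 = P ^ y1 * P ^ y2 * P ^ y3 := by
    rw [← Real.rpow_add hP0, ← Real.rpow_add hP0, ← Real.rpow_add hP0, ← Real.rpow_add hP0, h]
  calc (P ^ x1 - P ^ x1 * P ^ q) * P ^ x2 * P ^ x3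
      = (1 - P ^ q) * (P ^ x1 * P ^ x2 * P ^ x3) := by ring
    _ = (1 - P ^ q) * (P ^ y1 * P ^ y2 * P ^ y3) := by rw [e]
    _ = (1 - P ^ q) * P ^ y1 * P ^ y2 * P ^ y3 := by ring

private noncomputable def gg (P s : ℝ) (K L n c t : ℕ) (r m : ℕ) : ℝ :=
  (P ^ ((t : ℝ) * s * (m : ℝ)) - P ^ ((t : ℝ) * s * ((m - 1 : ℕ) : ℝ)))
    * P ^ ((r - m) * c + (r - 1) * (n - c))
    * P ^ ((K : ℝ) * (r : ℝ) - (L : ℝ) * (r : ℝ) * s)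

private noncomputable def FF (P s : ℝ) (K L n c t : ℕ) : ℕ × ℕ → ℝ :=
  fun rm => if 1 ≤ rm.2 ∧ rm.2 ≤ rm.1 then gg P s K L n c t rm.1 rm.2 else 0

private lemma gg_eq (P : ℝ) (hP0 : 0 < P) (s : ℝ) (K L n c t : ℕ) (hcn : c ≤ n) (m k : ℕ) :
    gg P s K L n c t (m + 1 + k) (m + 1)
      = ((1 - P ^ (-((t : ℝ) * s))) * P ^ ((K : ℝ) - ((L : ℝ) - (t : ℝ)) * s))
          * (P ^ ((K : ℝ) + ((n : ℝ) - (c : ℝ)) - ((L : ℝ) - (t : ℝ)) * s)) ^ m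
          * (P ^ ((K : ℝ) + (n : ℝ) - (L : ℝ) * s)) ^ k := by
  unfold gg
  rw [Nat.add_sub_cancel]
  rw [show m + 1 + k - (m + 1) = k from by omega, show m + 1 + k - 1 = m + k from by omega]
  rw [← Real.rpow_natCast P (k * c + (m + k) * (n - c)),
      ← Real.rpow_natCast (P ^ ((K : ℝ) + ((n : ℝ) - (c : ℝ)) - ((L : ℝ) - (t : ℝ)) * s)) m,
      ← Real.rpow_natCast (P ^ ((K : ℝ) + (n : ℝ) - (L : ℝ) * s)) k,
      ← Real.rpow_mul hP0.le, ← Real.rpow_mul hP0.le]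
  have e1 : P ^ ((t : ℝ) * s * ((m : ℕ) : ℝ))
      = P ^ ((t : ℝ) * s * (((m + 1 : ℕ)) : ℝ)) * P ^ (-((t : ℝ) * s)) := by
    rw [← Real.rpow_add hP0]
    congr 1
    push_cast
    ring
  rw [e1]
  refine pow_helper P hP0 (-((t : ℝ) * s)) _ _ _ _ _ _ ?_
  push_cast [Nat.cast_sub hcn]
  ring


/-- Summation formula for the basic generating function: for
`s > (K+n)/(L-t)` the series
`Σ_{r≥1} Σ_{1≤a_1,…,a_n≤r} μ(r,a_1)⋯μ(r,a_n) p^{Kr-Lrs}(p^{ts·min{r,a_1,…,a_c}} - 1)`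
converges absolutely, with sum
`p^{K-(L-t)s}(1-p^{-ts}) / ((1-p^{K+(n-c)-(L-t)s})(1-p^{K+n-Ls}))`.
Here `μ(r,a) = 1` if `a = r` and `μ(r,a) = p^{r-a}(1-p⁻¹)` if `a < r`. -/
theorem stmt2 (p : ℕ) (hp : p.Prime) (K L n c t : ℕ)
    (hc1 : 0 < c) (hcn : c ≤ n) (ht1 : 1 ≤ t) (htL : t < L)
    (s : ℝ) (hs : s > ((K : ℝ) + (n : ℝ)) / ((L : ℝ) - (t : ℝ))) :
    Summable (fun r : ℕ =>
      ∑ a ∈ Fintype.piFinset (fun _ : Fin n => Finset.Icc 1 r),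
        (∏ i : Fin n, (if a i = r then (1 : ℝ) else (p : ℝ) ^ (r - a i) * (1 - (p : ℝ)⁻¹)))
          * (p : ℝ) ^ ((K : ℝ) * r - (L : ℝ) * r * s)
          * ((p : ℝ) ^ ((t : ℝ) * s *
              ((min r (Finset.univ.inf' ⟨⟨0, hc1⟩, Finset.mem_univ _⟩
                (fun i : Fin c => a (Fin.castLE hcn i)))) : ℝ)) - 1))
    ∧ (∑' r : ℕ,
        ∑ a ∈ Fintype.piFinset (fun _ : Fin n => Finset.Icc 1 r),
          (∏ i : Fin n, (if a i = r then (1 : ℝ) else (p : ℝ) ^ (r - a i) * (1 - (p : ℝ)⁻¹)))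
            * (p : ℝ) ^ ((K : ℝ) * r - (L : ℝ) * r * s)
            * ((p : ℝ) ^ ((t : ℝ) * s *
                ((min r (Finset.univ.inf' ⟨⟨0, hc1⟩, Finset.mem_univ _⟩
                  (fun i : Fin c => a (Fin.castLE hcn i)))) : ℝ)) - 1))
      = (p : ℝ) ^ ((K : ℝ) - ((L : ℝ) - (t : ℝ)) * s) * (1 - (p : ℝ) ^ (-((t : ℝ) * s)))
        / ((1 - (p : ℝ) ^ ((K : ℝ) + ((n : ℝ) - (c : ℝ)) - ((L : ℝ) - (t : ℝ)) * s))
          * (1 - (p : ℝ) ^ ((K : ℝ) + (n : ℝ) - (L : ℝ) * s))) := by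
  classical
  have hP1 : (1 : ℝ) < (p : ℝ) := by exact_mod_cast hp.one_lt
  have hP0 : (0 : ℝ) < (p : ℝ) := lt_trans one_pos hP1
  have hLt : (0 : ℝ) < (L : ℝ) - (t : ℝ) := by
    have : (t : ℝ) < (L : ℝ) := by exact_mod_cast htL
    linarith
  have hs0 : 0 < s := lt_of_le_of_lt (div_nonneg (by positivity) hLt.le) hs
  have hKn : (K : ℝ) + (n : ℝ) < ((L : ℝ) - (t : ℝ)) * s := by
    rw [gt_iff_lt, div_lt_iff₀ hLt] at hs
    linarith
  have hts0 : 0 ≤ (t : ℝ) * s := mul_nonneg (Nat.cast_nonneg t) hs0.le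
  set A : ℝ := (p : ℝ) ^ ((K : ℝ) + ((n : ℝ) - (c : ℝ)) - ((L : ℝ) - (t : ℝ)) * s) with hA
  set B : ℝ := (p : ℝ) ^ ((K : ℝ) + (n : ℝ) - (L : ℝ) * s) with hB
  set C : ℝ := (1 - (p : ℝ) ^ (-((t : ℝ) * s))) * (p : ℝ) ^ ((K : ℝ) - ((L : ℝ) - (t : ℝ)) * s)
    with hC
  have hA0 : 0 < A := by rw [hA]; exact Real.rpow_pos_of_pos hP0 _
  have hB0 : 0 < B := by rw [hB]; exact Real.rpow_pos_of_pos hP0 _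
  have hA1 : A < 1 := by
    rw [hA]
    apply Real.rpow_lt_one_of_one_lt_of_neg hP1
    have hc0 : (0 : ℝ) ≤ (c : ℝ) := Nat.cast_nonneg c
    linarith
  have hB1 : B < 1 := by
    rw [hB]
    apply Real.rpow_lt_one_of_one_lt_of_neg hP1
    have hexp : ((L : ℝ) - (t : ℝ)) * s = (L : ℝ) * s - (t : ℝ) * s := by ring
    linarith [hKn, hts0, hexp]
  have hC0 : 0 ≤ C := by
    rw [hC]
    apply mul_nonneg
    · have := Real.rpow_le_one_of_one_le_of_nonpos hP1.le (neg_nonpos.mpr hts0)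
      linarith
    · exact (Real.rpow_pos_of_pos hP0 _).le
  -- inner sum identity
  have hterm : ∀ r : ℕ,
      (∑ a ∈ Fintype.piFinset (fun _ : Fin n => Finset.Icc 1 r),
        (∏ i : Fin n, (if a i = r then (1 : ℝ) else (p : ℝ) ^ (r - a i) * (1 - (p : ℝ)⁻¹)))
          * (p : ℝ) ^ ((K : ℝ) * r - (L : ℝ) * r * s)
          * ((p : ℝ) ^ ((t : ℝ) * s *
              ((min r (Finset.univ.inf' ⟨⟨0, hc1⟩, Finset.mem_univ _⟩
                (fun i : Fin c => a (Fin.castLE hcn i)))) : ℝ)) - 1))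
      = ∑ m ∈ Finset.Icc 1 r, gg (p : ℝ) s K L n c t r m := by
    intro r
    have h1 : ∀ a ∈ Fintype.piFinset (fun _ : Fin n => Finset.Icc 1 r),
        (∏ i : Fin n, (if a i = r then (1 : ℝ) else (p : ℝ) ^ (r - a i) * (1 - (p : ℝ)⁻¹)))
          * (p : ℝ) ^ ((K : ℝ) * r - (L : ℝ) * r * s)
          * ((p : ℝ) ^ ((t : ℝ) * s *
              ((min r (Finset.univ.inf' ⟨⟨0, hc1⟩, Finset.mem_univ _⟩
                (fun i : Fin c => a (Fin.castLE hcn i)))) : ℝ)) - 1)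
        = ((∏ i : Fin n, (if a i = r then (1 : ℝ) else (p : ℝ) ^ (r - a i) * (1 - (p : ℝ)⁻¹)))
          * ((p : ℝ) ^ ((t : ℝ) * s *
              ((min r (Finset.univ.inf' ⟨⟨0, hc1⟩, Finset.mem_univ _⟩
                (fun i : Fin c => a (Fin.castLE hcn i)))) : ℝ)) - 1))
          * (p : ℝ) ^ ((K : ℝ) * r - (L : ℝ) * r * s) := fun a _ => by ring
    rw [Finset.sum_congr rfl h1, ← Finset.sum_mul,
      innerSumAux (p : ℝ) hP0 n c hc1 hcn ((t : ℝ) * s) r, Finset.sum_mul]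
    rfl
  -- nonnegativity of gg and FF
  have hg0 : ∀ r m : ℕ, 0 ≤ gg (p : ℝ) s K L n c t r m := by
    intro r m
    unfold gg
    have h1 : (p : ℝ) ^ ((t : ℝ) * s * ((m - 1 : ℕ) : ℝ)) ≤ (p : ℝ) ^ ((t : ℝ) * s * (m : ℝ)) := by
      apply Real.rpow_le_rpow_of_exponent_le hP1.le
      have : ((m - 1 : ℕ) : ℝ) ≤ (m : ℝ) := by exact_mod_cast Nat.sub_le m 1
      exact mul_le_mul_of_nonneg_left this hts0
    have h2 : (0 : ℝ) ≤ (p : ℝ) ^ ((r - m) * c + (r - 1) * (n - c)) := pow_nonneg hP0.le _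
    have h3 : (0 : ℝ) ≤ (p : ℝ) ^ ((K : ℝ) * (r : ℝ) - (L : ℝ) * (r : ℝ) * s) :=
      (Real.rpow_pos_of_pos hP0 _).le
    exact mul_nonneg (mul_nonneg (by linarith) h2) h3
  have hF0 : ∀ z : ℕ × ℕ, 0 ≤ FF (p : ℝ) s K L n c t z := by
    intro z
    unfold FF
    split
    · exact hg0 _ _
    · exact le_refl 0
  -- the reindexed function
  have hFcomp : ∀ z : ℕ × ℕ,
      FF (p : ℝ) s K L n c t (z.1 + 1 + z.2, z.1 + 1) = (C * A ^ z.1) * B ^ z.2 := by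
    intro z
    have h1 : FF (p : ℝ) s K L n c t (z.1 + 1 + z.2, z.1 + 1)
        = gg (p : ℝ) s K L n c t (z.1 + 1 + z.2) (z.1 + 1) := by
      show (if 1 ≤ z.1 + 1 ∧ z.1 + 1 ≤ z.1 + 1 + z.2 then
        gg (p : ℝ) s K L n c t (z.1 + 1 + z.2) (z.1 + 1) else 0) = _
      rw [if_pos ⟨by omega, by omega⟩]
    rw [h1, gg_eq (p : ℝ) hP0 s K L n c t hcn z.1 z.2, hC, hA, hB]
  have hinj : Function.Injective (fun z : ℕ × ℕ => (z.1 + 1 + z.2, z.1 + 1)) := by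
    intro x y h
    simp only [Prod.mk.injEq] at h
    exact Prod.ext_iff.mpr ⟨by omega, by omega⟩
  have hoff : ∀ z ∉ Set.range (fun z : ℕ × ℕ => (z.1 + 1 + z.2, z.1 + 1)),
      FF (p : ℝ) s K L n c t z = 0 := by
    rintro ⟨r, m⟩ hz
    show (if 1 ≤ m ∧ m ≤ r then gg (p : ℝ) s K L n c t r m else 0) = 0
    rw [if_neg]
    rintro ⟨h1, h2⟩
    exact hz ⟨(m - 1, r - m), by simp only [Prod.mk.injEq]; omega⟩
  have hsumFcomp : Summable (fun z : ℕ × ℕ => (C * A ^ z.1) * B ^ z.2) := by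
    apply Summable.mul_of_nonneg (f := fun m : ℕ => C * A ^ m) (g := fun k : ℕ => B ^ k)
    · exact (summable_geometric_of_lt_one hA0.le hA1).mul_left C
    · exact summable_geometric_of_lt_one hB0.le hB1
    · exact fun m => mul_nonneg hC0 (pow_nonneg hA0.le m)
    · exact fun k => pow_nonneg hB0.le k
  have hsumF : Summable (FF (p : ℝ) s K L n c t) := by
    rw [← Function.Injective.summable_iff hinj hoff]
    have hcomp : (FF (p : ℝ) s K L n c t ∘ fun z : ℕ × ℕ => (z.1 + 1 + z.2, z.1 + 1))
        = fun z : ℕ × ℕ => (C * A ^ z.1) * B ^ z.2 := funext fun z => hFcomp z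
    rw [hcomp]
    exact hsumFcomp
  obtain ⟨hrows, houter⟩ := (summable_prod_of_nonneg hF0).mp hsumF
  have hrow_eq : ∀ r : ℕ, (∑' m : ℕ, FF (p : ℝ) s K L n c t (r, m))
      = ∑ m ∈ Finset.Icc 1 r, gg (p : ℝ) s K L n c t r m := by
    intro r
    have h0 : ∀ m ∉ Finset.Icc 1 r, FF (p : ℝ) s K L n c t (r, m) = 0 := by
      intro m hm
      simp only [Finset.mem_Icc, not_and, not_le] at hm
      show (if 1 ≤ m ∧ m ≤ r then gg (p : ℝ) s K L n c t r m else 0) = 0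
      rw [if_neg]
      rintro ⟨h1, h2⟩
      exact absurd (hm h1) (by omega)
    rw [tsum_eq_sum h0]
    refine Finset.sum_congr rfl fun m hm => ?_
    simp only [Finset.mem_Icc] at hm
    show (if 1 ≤ m ∧ m ≤ r then gg (p : ℝ) s K L n c t r m else 0) = _
    rw [if_pos ⟨hm.1, hm.2⟩]
  have hfun_eq : (fun r : ℕ =>
      ∑ a ∈ Fintype.piFinset (fun _ : Fin n => Finset.Icc 1 r),
        (∏ i : Fin n, (if a i = r then (1 : ℝ) else (p : ℝ) ^ (r - a i) * (1 - (p : ℝ)⁻¹)))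
          * (p : ℝ) ^ ((K : ℝ) * r - (L : ℝ) * r * s)
          * ((p : ℝ) ^ ((t : ℝ) * s *
              ((min r (Finset.univ.inf' ⟨⟨0, hc1⟩, Finset.mem_univ _⟩
                (fun i : Fin c => a (Fin.castLE hcn i)))) : ℝ)) - 1))
      = fun r : ℕ => ∑' m : ℕ, FF (p : ℝ) s K L n c t (r, m) :=
    funext fun r => (hterm r).trans (hrow_eq r).symm
  constructor
  · rw [hfun_eq]
    exact houter
  · rw [hfun_eq]
    calc (∑' r : ℕ, ∑' m : ℕ, FF (p : ℝ) s K L n c t (r, m))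
        = ∑' z : ℕ × ℕ, FF (p : ℝ) s K L n c t z := (Summable.tsum_prod' hsumF hrows).symm
      _ = ∑' z : ℕ × ℕ, FF (p : ℝ) s K L n c t (z.1 + 1 + z.2, z.1 + 1) :=
          (Function.Injective.tsum_eq hinj (Function.support_subset_iff'.mpr hoff)).symm
      _ = ∑' z : ℕ × ℕ, (C * A ^ z.1) * B ^ z.2 := tsum_congr fun z => hFcomp z
      _ = (∑' m : ℕ, C * A ^ m) * ∑' k : ℕ, B ^ k := by
          refine (tsum_mul_tsum_of_summable_norm (f := fun m : ℕ => C * A ^ m)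
            (g := fun k : ℕ => B ^ k) ?_ ?_).symm
          · have habs : ∀ m : ℕ, ‖C * A ^ m‖ = |C| * A ^ m := fun m => by
              rw [norm_mul, norm_pow, Real.norm_eq_abs, Real.norm_eq_abs, abs_of_nonneg hA0.le]
            simp only [habs]
            exact (summable_geometric_of_lt_one hA0.le hA1).mul_left _
          · have habs : ∀ k : ℕ, ‖B ^ k‖ = B ^ k := fun k => by
              rw [norm_pow, Real.norm_eq_abs, abs_of_nonneg hB0.le]
            simp only [habs]
            exact summable_geometric_of_lt_one hB0.le hB1
      _ = (C * (1 - A)⁻¹) * (1 - B)⁻¹ := by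
          rw [tsum_mul_left, tsum_geometric_of_lt_one hA0.le hA1,
            tsum_geometric_of_lt_one hB0.le hB1]
      _ = (p : ℝ) ^ ((K : ℝ) - ((L : ℝ) - (t : ℝ)) * s) * (1 - (p : ℝ) ^ (-((t : ℝ) * s)))
            / ((1 - A) * (1 - B)) := by
          rw [hC, div_eq_mul_inv, mul_inv]
          ring
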